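/- For all n > 0 and every lattice path P ∈ R(Nⁿ Eⁿ) in the n×n square, mkwd(φ_LW(P)) = sw⁻_{1,-1}(mkwd(P)). -/

import Mathlib

inductive Letter : Type
  | N : Letter
  | E : Letter
deriving DecidableEq, Repr

/-- weight of a letter: `N` has weight `r`, `E` has weight `s`. -/
def wt (r s : ℤ) : Letter → ℤ
  | Letter.N => r
  | Letter.E => s

/-- Pair each letter of the word with its `(r,s)`-level (east-north convention),
    starting from level `l`.  With `l = 0`, the `i`-th letter `wᵢ` is paired with
    `lᵢ = l_{i-1} + wt wᵢ`. -/
def lvls (r s : ℤ) : ℤ → List Letter → List (Letter × ℤ)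
  | _, [] => []
  | l, c :: w => (c, l + wt r s c) :: lvls r s (l + wt r s c) w

/-- `negBefore k k' = true` iff level `k` is swept before (or equals) level `k'`
    in the negative sweep order `-1, -2, -3, …` then `…, 3, 2, 1, 0`. -/
def negBefore (k k' : ℤ) : Bool :=
  if k < 0 then (if k' < 0 then decide (k' ≤ k) else true)
  else (if k' < 0 then false else decide (k' ≤ k))

/-- `posBefore k k' = true` iff level `k` is swept before (or equals) level `k'`
    in the positive sweep order `0, -1, -2, …` then `…, 3, 2, 1`. -/
def posBefore (k k' : ℤ) : Bool :=
  if k ≤ 0 then (if k' ≤ 0 then decide (k' ≤ k) else true)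
  else (if k' ≤ 0 then false else decide (k' ≤ k))

/-- The negative sweep map `sw⁻_{r,s}`: levels are visited in the order
    `-1, -2, …` then `…, 2, 1, 0`, and each level is scanned right-to-left;
    implemented as a stable sort of the reversed word by the level order. -/
def sweepNeg (r s : ℤ) (w : List Letter) : List Letter :=
  (((lvls r s 0 w).reverse).mergeSort (fun p q => negBefore p.2 q.2)).map Prod.fst

/-- The positive sweep map `sw⁺_{r,s}`: levels are visited in the order
    `0, -1, -2, …` then `…, 3, 2, 1`, and each level is scanned left-to-right;
    implemented as a stable sort of the word by the level order. -/
def sweepPos (r s : ℤ) (w : List Letter) : List Letter :=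
  ((lvls r s 0 w).mergeSort (fun p q => posBefore p.2 q.2)).map Prod.fst

/-- The transposition map `flip`, interchanging `N` and `E`. -/
def flipL : Letter → Letter
  | Letter.N => Letter.E
  | Letter.E => Letter.N

/-- A word is an `(r,s)`-Dyck word iff all of its levels `lᵢ` (`i ≥ 1`) are nonnegative. -/
def IsDyckWord (r s : ℤ) (w : List Letter) : Prop :=
  ∀ p ∈ lvls r s 0 w, 0 ≤ p.2

/-- The area vector `g(P) = (g₀, …, g_{n-1})` of a path in the `n×n` square:
    `gᵢ = i - xᵢ`, where `xᵢ` is the number of east steps before the `(i+1)`-th north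
    step; equivalently, `gᵢ + n - i` is the number of complete lattice squares in the
    strip `i ≤ y ≤ i+1` lying right of the path and left of `x = n`. -/
def areaVecSq (w : List Letter) : List ℤ :=
  (List.range w.length).filterMap fun p =>
    if w[p]? = some Letter.N then
      some (((w.take p).count Letter.N : ℤ) - ((w.take p).count Letter.E : ℤ))
    else none

/-- `σ⁽ⁱ⁾`: the subword `z⁽ⁱ⁾` of the area vector consisting of entries equal to
    `i` or `i-1`, with each `i` replaced by `E` and each `i-1` replaced by `N`. -/
def sigmaLW (g : List ℤ) (i : ℤ) : List Letter :=
  (g.filter (fun x => decide (x = i ∨ x = i - 1))).map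
    (fun x => if x = i then Letter.E else Letter.N)

/-- `τ⁽ⁱ⁾`: for `i ≥ 0`, the reversal of `σ⁽ⁱ⁾`; for `i < 0` with `σ⁽ⁱ⁾` nonempty,
    writing `σ⁽ⁱ⁾ = σ̃⁽ⁱ⁾·E`, it is `rev(σ̃⁽ⁱ⁾)·E`. -/
def tauLW (g : List ℤ) (i : ℤ) : List Letter :=
  if 0 ≤ i then (sigmaLW g i).reverse
  else if sigmaLW g i = [] then []
  else ((sigmaLW g i).dropLast).reverse ++ [Letter.E]

/-- The Loehr–Warrington map `φ_LW` (as a word):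
    the concatenation `τ⁽⁻¹⁾ τ⁽⁻²⁾ ⋯ τ⁽⁻ⁿ⁾ τ⁽ⁿ⁾ ⋯ τ⁽²⁾ τ⁽¹⁾ τ⁽⁰⁾`. -/
def phiLW (n : ℕ) (w : List Letter) : List Letter :=
  let g := areaVecSq w
  ((List.range n).map (fun j => tauLW g (-((j : ℤ) + 1)))).flatten ++
    ((List.range (n + 1)).map (fun j => tauLW g ((n : ℤ) - (j : ℤ)))).flatten


section LWAux

open Letter

/-- final level of a word under `(1,-1)` weights -/
def lvl (w : List Letter) : ℤ := (w.count Letter.N : ℤ) - (w.count Letter.E : ℤ)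

/-- letters of `w` at level `k`, in left-to-right order -/
def grp (w : List Letter) (k : ℤ) : List Letter :=
  ((lvls 1 (-1) 0 w).filter (fun p => decide (p.2 = k))).map Prod.fst

def preE (k : ℤ) : List Letter := if k < 0 then [Letter.E] else []

def keysL (n : ℕ) : List ℤ :=
  (List.range n).map (fun i : ℕ => -((i : ℤ) + 1)) ++
    (List.range (n + 1)).map (fun i : ℕ => (n : ℤ) - (i : ℤ))

lemma lvls_append (r s a : ℤ) (u v : List Letter) :
    lvls r s a (u ++ v) = lvls r s a u ++ lvls r s (a + (u.map (wt r s)).sum) v := by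
  induction u generalizing a with
  | nil => simp [lvls]
  | cons c u ih => simp [lvls, ih, add_assoc]

lemma sum_wt (w : List Letter) : ((w.map (wt 1 (-1))).sum) = lvl w := by
  induction w with
  | nil => simp [lvl]
  | cons c w ih =>
    cases c <;> simp [wt, lvl, List.count_cons, ih] <;>
      simp [lvl] at ih ⊢ <;> omega

lemma lvl_snoc (w : List Letter) (c : Letter) :
    lvl (w ++ [c]) = lvl w + wt 1 (-1) c := by
  cases c <;> simp [lvl, wt, List.count_append] <;> push_cast <;> ring

lemma areaVecSq_snoc (w : List Letter) (c : Letter) :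
    areaVecSq (w ++ [c]) = areaVecSq w ++ (if c = Letter.N then [lvl w] else []) := by
  unfold areaVecSq
  rw [List.length_append, List.length_singleton, List.range_succ, List.filterMap_append]
  congr 1
  · apply List.filterMap_congr
    intro p hp
    rw [List.mem_range] at hp
    rw [List.getElem?_append_left hp, List.take_append_of_le_length (le_of_lt hp)]
  · simp only [List.filterMap_cons, List.filterMap_nil]
    rw [List.getElem?_concat_length, List.take_left]
    cases c <;> simp [lvl]

lemma sigmaLW_snoc (g : List ℤ) (x i : ℤ) :
    sigmaLW (g ++ [x]) i = sigmaLW g i ++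
      (if x = i then [Letter.E] else if x = i - 1 then [Letter.N] else []) := by
  unfold sigmaLW
  rw [List.filter_append, List.map_append]
  congr 1
  by_cases h1 : x = i
  · simp [h1]
  · by_cases h2 : x = i - 1
    · have : ¬ (i - 1 = i) := by omega
      simp [h1, h2, this]
    · simp [h1, h2]

lemma lvls_snoc (w : List Letter) (c : Letter) :
    lvls 1 (-1) 0 (w ++ [c]) = lvls 1 (-1) 0 w ++ [(c, lvl w + wt 1 (-1) c)] := by
  rw [lvls_append]
  simp [lvls, sum_wt]

lemma grp_snoc (w : List Letter) (c : Letter) (k : ℤ) :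
    grp (w ++ [c]) k = grp w k ++ (if lvl w + wt 1 (-1) c = k then [c] else []) := by
  unfold grp
  rw [lvls_snoc, List.filter_append, List.map_append]
  congr 1
  by_cases h : lvl w + wt 1 (-1) c = k <;> simp [h]

lemma invariant (w : List Letter) (k : ℤ) :
    (lvl w ≤ k ∧ grp w k = preE k ++ sigmaLW (areaVecSq w) k) ∨
    (k < lvl w ∧ ((k < 0 ∧ sigmaLW (areaVecSq w) k = [] ∧ grp w k = []) ∨
      ∃ t, sigmaLW (areaVecSq w) k = t ++ [Letter.E] ∧ grp w k = preE k ++ t)) := by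
  induction w using List.reverseRecOn with
  | nil =>
    by_cases hk : k < 0
    · right
      refine ⟨by simpa [lvl] using hk, Or.inl ⟨hk, ?_, ?_⟩⟩ <;>
        simp [sigmaLW, areaVecSq, grp, lvls]
    · left
      refine ⟨by simp [lvl]; omega, ?_⟩
      simp [sigmaLW, areaVecSq, grp, lvls, preE, hk]
  | append_singleton w c ih =>
    rcases c with _ | _
    · -- c = N
      rw [grp_snoc, lvl_snoc, areaVecSq_snoc]
      simp only [wt, eq_self_iff_true, if_true]
      rw [sigmaLW_snoc]
      by_cases hk1 : k = lvl w + 1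
      · rcases ih with ⟨hlk, hf⟩ | ⟨hkl, _⟩
        · left
          refine ⟨le_of_eq hk1.symm, ?_⟩
          have h1 : ¬ (lvl w = k) := by omega
          have h2 : lvl w = k - 1 := by omega
          have h3 : lvl w + 1 = k := by omega
          simp only [if_pos h3, if_neg h1, if_pos h2]
          rw [hf]
          simp
          exact if_pos h3
        · omega
      · by_cases hk0 : k = lvl w
        · rcases ih with ⟨hlk, hf⟩ | ⟨hkl, _⟩
          · right
            refine ⟨by omega, Or.inr ⟨sigmaLW (areaVecSq w) k, ?_, ?_⟩⟩
            · simp [hk0.symm]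
            · simp [hf]
              exact if_neg (by omega)
          · omega
        · have h1 : ¬ (lvl w = k) := fun h => hk0 h.symm
          have h2 : ¬ (lvl w = k - 1) := by omega
          have h3 : ¬ (lvl w + 1 = k) := by omega
          simp only [h1, h2, h3, if_false, List.append_nil]
          rcases ih with ⟨hlk, hf⟩ | ⟨hkl, hrest⟩
          · exact Or.inl ⟨by omega, hf⟩
          · exact Or.inr ⟨by omega, hrest⟩
    · -- c = E
      rw [grp_snoc, lvl_snoc, areaVecSq_snoc]
      simp only [wt, reduceCtorEq, if_false, List.append_nil]
      by_cases hk : k = lvl w + -1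
      · rcases ih with ⟨hlk, _⟩ | ⟨hkl, hrest⟩
        · omega
        · left
          refine ⟨le_of_eq hk.symm, ?_⟩
          rcases hrest with ⟨hneg, hσ, hgrp⟩ | ⟨t, hσ, hgrp⟩
          · simp [hk.symm, hσ, hgrp, preE, hneg]
          · simp [hk.symm, hσ, hgrp]
      · by_cases hk2 : k < lvl w + -1
        · rcases ih with ⟨hlk, _⟩ | ⟨hkl, hrest⟩
          · omega
          · have : ¬ (lvl w + -1 = k) := by omega
            simp only [this, if_false, List.append_nil]
            exact Or.inr ⟨by omega, hrest⟩
        · rcases ih with ⟨hlk, hf⟩ | ⟨hkl, _⟩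
          · have : ¬ (lvl w + -1 = k) := by omega
            simp only [this, if_false, List.append_nil]
            exact Or.inl ⟨by omega, hf⟩
          · omega

lemma tauLW_eq_grp_reverse (w : List Letter) (hl : lvl w = 0) (k : ℤ) :
    tauLW (areaVecSq w) k = (grp w k).reverse := by
  by_cases h : 0 ≤ k
  · rcases invariant w k with ⟨_, hf⟩ | ⟨hkl, _⟩
    · rw [tauLW, if_pos h, hf, preE, if_neg (by omega)]
      simp
    · rw [hl] at hkl; omega
  · rcases invariant w k with ⟨hlk, _⟩ | ⟨_, hrest⟩
    · rw [hl] at hlk; omega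
    · rcases hrest with ⟨_, hσ, hgrp⟩ | ⟨t, hσ, hgrp⟩
      · rw [tauLW, if_neg h, if_pos hσ, hgrp]
        simp
      · rw [tauLW, if_neg h, if_neg (by simp [hσ]), hσ, hgrp, preE, if_pos (by omega)]
        rw [List.dropLast_concat]
        simp

lemma negBefore_trans (a b c : ℤ) (h1 : negBefore a b = true) (h2 : negBefore b c = true) :
    negBefore a c = true := by
  unfold negBefore at * ; split_ifs at * <;> simp_all <;> omega

lemma negBefore_total (a b : ℤ) : (negBefore a b || negBefore b a) = true := by
  unfold negBefore ; split_ifs <;> simp_all <;> omega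

lemma negBefore_antisymm (a b : ℤ) (h1 : negBefore a b = true) (h2 : negBefore b a = true) :
    a = b := by
  unfold negBefore at * ; split_ifs at * <;> simp_all <;> omega

lemma negBefore_refl (a : ℤ) : negBefore a a = true := by
  unfold negBefore ; split_ifs <;> simp_all

lemma filter_prefix (o : List (Letter × ℤ)) (k₀ : ℤ)
    (ho : o.Pairwise (fun p q => negBefore p.2 q.2 = true))
    (hmin : ∀ p ∈ o, p.2 ≠ k₀ → negBefore p.2 k₀ = false) :
    o = o.filter (fun p => decide (p.2 = k₀)) ++ o.filter (fun p => decide (p.2 ≠ k₀)) := by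
  induction o with
  | nil => simp
  | cons a o ih =>
    rcases List.pairwise_cons.mp ho with ⟨ha, ho'⟩
    by_cases h : a.2 = k₀
    · rw [List.filter_cons_of_pos (by simp [h]), List.filter_cons_of_neg (by simp [h])]
      rw [List.cons_append]
      congr 1
      exact ih ho' (fun p hp => hmin p (List.mem_cons_of_mem a hp))
    · have hfa : negBefore a.2 k₀ = false := hmin a List.mem_cons_self h
      have hall : ∀ x ∈ (a :: o), x.2 ≠ k₀ := by
        intro x hx heq
        rcases List.mem_cons.mp hx with rfl | hx
        · exact h heq
        · have h3 := ha x hx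
          rw [heq] at h3
          rw [hfa] at h3
          exact Bool.false_ne_true h3
      have h1 : (a :: o).filter (fun p => decide (p.2 = k₀)) = [] := by
        rw [List.filter_eq_nil_iff]
        intro p hp
        simpa using hall p hp
      have h2 : (a :: o).filter (fun p => decide (p.2 ≠ k₀)) = a :: o := by
        rw [List.filter_eq_self]
        intro p hp
        simpa using hall p hp
      rw [h1, h2, List.nil_append]

lemma sorted_flatMap (keys : List ℤ) (o : List (Letter × ℤ))
    (ho : o.Pairwise (fun p q => negBefore p.2 q.2 = true))
    (hstrict : keys.Pairwise (fun a b => negBefore a b = true ∧ a ≠ b))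
    (hmem : ∀ p ∈ o, p.2 ∈ keys) :
    o = keys.flatMap (fun k => o.filter (fun p => decide (p.2 = k))) := by
  induction keys generalizing o with
  | nil =>
    rcases o with _ | ⟨a, o⟩
    · simp
    · exact absurd (hmem a List.mem_cons_self) List.not_mem_nil
  | cons k₀ rest ih =>
    rcases List.pairwise_cons.mp hstrict with ⟨hk₀, hrest⟩
    have hmin : ∀ p ∈ o, p.2 ≠ k₀ → negBefore p.2 k₀ = false := by
      intro p hp hne
      by_contra hB
      have hB' : negBefore p.2 k₀ = true := by
        cases hb : negBefore p.2 k₀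
        · exact absurd hb hB
        · rfl
      have hk : p.2 ∈ rest := by
        rcases List.mem_cons.mp (hmem p hp) with h | h
        · exact absurd h hne
        · exact h
      rcases hk₀ p.2 hk with ⟨h1, h2⟩
      exact hne (negBefore_antisymm _ _ hB' h1)
    have hsplit := filter_prefix o k₀ ho hmin
    rw [List.flatMap_cons]
    set o' := o.filter (fun p => decide (p.2 ≠ k₀)) with ho'def
    have ho2 : o'.Pairwise (fun p q => negBefore p.2 q.2 = true) :=
      ho.sublist List.filter_sublist
    have hmem2 : ∀ p ∈ o', p.2 ∈ rest := by
      intro p hp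
      rcases List.mem_filter.mp hp with ⟨hpo, hpne⟩
      rcases List.mem_cons.mp (hmem p hpo) with h | h
      · simp [h] at hpne
      · exact h
    have ihapp := ih o' ho2 hrest hmem2
    have hff : ∀ k ∈ rest, o'.filter (fun p => decide (p.2 = k)) =
        o.filter (fun p => decide (p.2 = k)) := by
      intro k hk
      rcases hk₀ k hk with ⟨_, hne⟩
      rw [ho'def, List.filter_filter]
      apply List.filter_congr
      intro p _
      by_cases h : p.2 = k
      · simp [h, hne.symm]
      · simp [h]
    have hfm : rest.flatMap (fun k => o'.filter (fun p => decide (p.2 = k))) =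
        rest.flatMap (fun k => o.filter (fun p => decide (p.2 = k))) := by
      simp only [List.flatMap]
      exact congrArg List.flatten (List.map_congr_left hff)
    rw [← hfm, ← ihapp]
    exact hsplit

lemma mergeSort_flatMap (l : List (Letter × ℤ)) (keys : List ℤ)
    (hstrict : keys.Pairwise (fun a b => negBefore a b = true ∧ a ≠ b))
    (hmem : ∀ p ∈ l, p.2 ∈ keys) :
    l.mergeSort (fun p q => negBefore p.2 q.2) =
      keys.flatMap (fun k => l.filter (fun p => decide (p.2 = k))) := by
  set le : (Letter × ℤ) → (Letter × ℤ) → Bool := fun p q => negBefore p.2 q.2 with hle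
  have htrans : ∀ a b c : Letter × ℤ, le a b = true → le b c = true → le a c = true :=
    fun a b c h1 h2 => negBefore_trans _ _ _ h1 h2
  have htotal : ∀ a b : Letter × ℤ, (le a b || le b a) = true :=
    fun a b => negBefore_total _ _
  have hperm : (l.mergeSort le).Perm l := List.mergeSort_perm l le
  have ho : (l.mergeSort le).Pairwise (fun p q => le p q = true) :=
    List.pairwise_mergeSort htrans htotal l
  have hmem' : ∀ p ∈ l.mergeSort le, p.2 ∈ keys := fun p hp => hmem p (hperm.mem_iff.mp hp)
  have hstep := sorted_flatMap keys (l.mergeSort le) ho hstrict hmem'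
  rw [hstep]
  simp only [List.flatMap]
  refine congrArg List.flatten (List.map_congr_left ?_)
  intro k _
  have hsub : (l.filter (fun p => decide (p.2 = k))).Sublist (l.mergeSort le) := by
    apply List.sublist_mergeSort htrans htotal
    · have hall : ∀ p ∈ l.filter (fun p => decide (p.2 = k)), p.2 = k := by
        intro p hp
        simpa using (List.mem_filter.mp hp).2
      apply List.pairwise_iff_forall_sublist.mpr
      intro a b hab
      have ha := hall a (hab.subset List.mem_cons_self)
      have hb := hall b (hab.subset (by simp))
      show negBefore a.2 b.2 = true
      rw [ha, hb]; exact negBefore_refl k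
    · exact List.filter_sublist
  have hfix : (l.filter (fun p => decide (p.2 = k))).filter (fun p => decide (p.2 = k)) =
      l.filter (fun p => decide (p.2 = k)) := by
    rw [List.filter_eq_self]
    intro p hp
    exact (List.mem_filter.mp hp).2
  have hsub2 : (l.filter (fun p => decide (p.2 = k))).Sublist
      ((l.mergeSort le).filter (fun p => decide (p.2 = k))) := by
    have h5 := hsub.filter (fun p => decide (p.2 = k))
    rwa [hfix] at h5
  have hlen : ((l.mergeSort le).filter (fun p => decide (p.2 = k))).length =
      (l.filter (fun p => decide (p.2 = k))).length :=
    (hperm.filter _).length_eq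
  exact (hsub2.eq_of_length hlen.symm).symm

lemma keysL_pairwise (n : ℕ) :
    (keysL n).Pairwise (fun a b => negBefore a b = true ∧ a ≠ b) := by
  rw [keysL, List.pairwise_append]
  refine ⟨?_, ?_, ?_⟩
  · refine List.Pairwise.map _ ?_ (List.pairwise_lt_range (n := n))
    intro a b hab
    constructor
    · unfold negBefore
      split_ifs <;> simp_all <;> omega
    · intro h; omega
  · have hp : (List.range (n+1)).Pairwise (fun i j => i < j ∧ j < n + 1) := by
      apply List.Pairwise.imp_of_mem (R := (· < ·))
      · intro a b _ hb hab
        exact ⟨hab, List.mem_range.mp hb⟩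
      · exact List.pairwise_lt_range (n := n+1)
    refine List.Pairwise.map _ ?_ hp
    rintro a b ⟨hab, hb⟩
    constructor
    · unfold negBefore
      split_ifs <;> simp_all <;> omega
    · intro h; omega
  · intro a ha b hb
    rw [List.mem_map] at ha hb
    rcases ha with ⟨i, hi, rfl⟩
    rcases hb with ⟨j, hj, rfl⟩
    rw [List.mem_range] at hi hj
    constructor
    · unfold negBefore
      split_ifs <;> simp_all <;> omega
    · intro h; omega

lemma mem_keysL (n : ℕ) (k : ℤ) (h1 : -(n : ℤ) ≤ k) (h2 : k ≤ n) : k ∈ keysL n := by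
  rw [keysL, List.mem_append]
  by_cases hk : k < 0
  · left
    rw [List.mem_map]
    exact ⟨(-k - 1).toNat, List.mem_range.mpr (by omega), by omega⟩
  · right
    rw [List.mem_map]
    exact ⟨((n : ℤ) - k).toNat, List.mem_range.mpr (by omega), by omega⟩

lemma lvls_bound (w : List Letter) : ∀ a : ℤ, ∀ p ∈ lvls 1 (-1) a w,
    a - (w.count Letter.E : ℤ) ≤ p.2 ∧ p.2 ≤ a + (w.count Letter.N : ℤ) := by
  induction w with
  | nil => intro a p hp; simp [lvls] at hp
  | cons c w ih =>
    intro a p hp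
    simp only [lvls, List.mem_cons] at hp
    rcases hp with rfl | hp
    · cases c <;> simp [wt, List.count_cons] <;> push_cast <;> omega
    · have h := ih (a + wt 1 (-1) c) p hp
      cases c <;> simp [wt] at h <;> simp [List.count_cons] <;> push_cast <;> omega

lemma flatMap_coe_range (m : ℕ) :
    ((List.range m).flatMap fun a => [(a : ℤ)]) = (List.range m).map (fun a : ℕ => (a : ℤ)) :=
  by simp [List.map_eq_flatMap]

end LWAux

/-- For all `n > 0` and every lattice path `P` in the `n×n` square,
    `mkwd(φ_LW(P)) = sw⁻_{1,-1}(mkwd(P))`. -/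
theorem phiLW_eq_sweep (n : ℕ) (hn : 0 < n) (w : List Letter)
    (hN : w.count Letter.N = n) (hE : w.count Letter.E = n) :
    phiLW n w = sweepNeg 1 (-1) w := by
  have hlvl : lvl w = 0 := by rw [lvl, hN, hE]; ring
  have hmem : ∀ p ∈ (lvls 1 (-1) 0 w).reverse, p.2 ∈ keysL n := by
    intro p hp
    rw [List.mem_reverse] at hp
    have hb := lvls_bound w 0 p hp
    rw [hN, hE] at hb
    exact mem_keysL n p.2 (by omega) (by omega)
  rw [sweepNeg, mergeSort_flatMap _ (keysL n) (keysL_pairwise n) hmem,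
    List.map_flatMap]
  have hpt : ∀ k : ℤ, (((lvls 1 (-1) 0 w).reverse.filter
      (fun p => decide (p.2 = k))).map Prod.fst) = tauLW (areaVecSq w) k := by
    intro k
    rw [List.filter_reverse, List.map_reverse, tauLW_eq_grp_reverse w hlvl k]
    rfl
  rw [phiLW, keysL, List.flatMap_append]
  congr 1
  · simp only [List.pure_def, List.bind_eq_flatMap, flatMap_coe_range, ← List.map_eq_flatMap]
    simp only [List.flatMap, List.map_map]
    refine congrArg List.flatten (List.map_congr_left ?_)
    intro j hj
    simp only [Function.comp_apply]
    exact (hpt _).symm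
  · simp only [List.pure_def, List.bind_eq_flatMap, flatMap_coe_range, ← List.map_eq_flatMap]
    simp only [List.flatMap, List.map_map]
    refine congrArg List.flatten (List.map_congr_left ?_)
    intro j hj
    simp only [Function.comp_apply]
    exact (hpt _).symm
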